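/- Let G = {(ω_1, ω_2) ∈ (0, π) × (0, π) : ω_1 + ω_2 > π} ∪ {(ω_1, ω_2) ∈ (π, 2π) × (π, 2π) : ω_1 + ω_2 < 3π}. For every α ∈ (0, π], the ratio of the two-dimensional Lebesgue measure of G ∩ ((π − α, π + α) × (π − α, π + α)) to the area 4α² of the square (π − α, π + α)² equals 1/2 if α ≤ π/2, and equals (1/4)(−(π/α)² + 4(π/α) − 2) if α > π/2. That is, the probability that a perturbation of the unstable three-bug groups fixed point (ω_1, ω_2) = (π, π), chosen uniformly with each coordinate perturbed by less than α, lands in the cycle region G is p_3^stab(α) = 1/2 for α ≤ π/2 and (1/4)(−(π/α)² + 4(π/α) − 2) for α > π/2. -/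

import Mathlib

/-- The 'gray' cycle region of the three-bug phase portrait in the gap variables
`(ω_1, ω_2)`: all three bugs move in the same direction. -/
def cycleRegion : Set (ℝ × ℝ) :=
  {ω : ℝ × ℝ | ω.1 ∈ Set.Ioo 0 Real.pi ∧ ω.2 ∈ Set.Ioo 0 Real.pi ∧
      Real.pi < ω.1 + ω.2} ∪
  {ω : ℝ × ℝ | ω.1 ∈ Set.Ioo Real.pi (2 * Real.pi) ∧
      ω.2 ∈ Set.Ioo Real.pi (2 * Real.pi) ∧ ω.1 + ω.2 < 3 * Real.pi}

open Classical in
/-- The probability that a perturbation of the unstable three-bug 'groups' fixed point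
`(ω_1, ω_2) = (π, π)`, with each coordinate perturbed by less than `α`, lands in the
cycle region. -/
noncomputable def p3stab (α : ℝ) : ℝ :=
  if α ≤ Real.pi / 2 then 1 / 2
  else (1 / 4) * (-(Real.pi / α) ^ 2 + 4 * (Real.pi / α) - 2)

open MeasureTheory Set intervalIntegral

local notation "P" => Real.pi

private lemma pi_sub_max (α x : ℝ) :
    P - max (P - α) (P - x) = min α x := by
  rcases le_total α x with h | h
  · rw [min_eq_left h, max_eq_left (by linarith)]; ring
  · rw [min_eq_right h, max_eq_right (by linarith)]; ring

private lemma min_sub_pi (α x : ℝ) :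
    min (P + α) (3 * P - x) - P = min α (2 * P - x) := by
  rcases le_total (P + α) (3 * P - x) with h | h
  · rw [min_eq_left h, min_eq_left (by linarith)]; ring
  · rw [min_eq_right h, min_eq_right (by linarith)]; ring

/-- For every `α ∈ (0, π]`, the ratio of the Lebesgue measure of the intersection of the
cycle region `G` with the square `(π - α, π + α)²` to the area `4α²` of that square equals
`1/2` if `α ≤ π/2` and `(1/4)(-(π/α)² + 4(π/α) - 2)` if `α > π/2`. -/
theorem groups_perturbation_cycle_probability (α : ℝ) (hα : α ∈ Set.Ioc 0 Real.pi) :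
    MeasureTheory.volume (cycleRegion ∩
        (Set.Ioo (Real.pi - α) (Real.pi + α) ×ˢ Set.Ioo (Real.pi - α) (Real.pi + α))) =
      ENNReal.ofReal (4 * α ^ 2 * p3stab α) ∧
    (MeasureTheory.volume (cycleRegion ∩
        (Set.Ioo (Real.pi - α) (Real.pi + α) ×ˢ
          Set.Ioo (Real.pi - α) (Real.pi + α)))).toReal / (4 * α ^ 2) = p3stab α := by
  obtain ⟨h0, hπ⟩ := hα
  have hP0 : 0 < P := Real.pi_pos
  -- split the region into two `regionBetween`s
  have hset : cycleRegion ∩ (Ioo (P - α) (P + α) ×ˢ Ioo (P - α) (P + α)) =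
      regionBetween (fun x => max (P - α) (P - x)) (fun _ => P) (Ioo (P - α) P) ∪
      regionBetween (fun _ => P) (fun x => min (P + α) (3 * P - x)) (Ioo P (P + α)) := by
    ext ⟨x, y⟩
    simp only [cycleRegion, regionBetween, mem_inter_iff, mem_union, mem_setOf_eq,
      mem_Ioo, mem_prod, lt_min_iff, max_lt_iff]
    constructor
    · rintro ⟨⟨⟨hx1, hx2⟩, ⟨hy1, hy2⟩, hxy⟩ | ⟨⟨hx1, hx2⟩, ⟨hy1, hy2⟩, hxy⟩,
        ⟨hsx1, hsx2⟩, hsy1, hsy2⟩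
      · exact Or.inl ⟨⟨hsx1, hx2⟩, ⟨hsy1, by linarith⟩, hy2⟩
      · exact Or.inr ⟨⟨hx1, hsx2⟩, hy1, hsy2, by linarith⟩
    · rintro (⟨⟨hx1, hx2⟩, ⟨hy1, hy2⟩, hy3⟩ | ⟨⟨hx1, hx2⟩, hy1, hy2, hy3⟩)
      · exact ⟨Or.inl ⟨⟨by linarith, hx2⟩, ⟨by linarith, hy3⟩, by linarith⟩,
          ⟨hx1, by linarith⟩, hy1, by linarith⟩
      · exact ⟨Or.inr ⟨⟨hx1, by linarith⟩, ⟨hy1, by linarith⟩, by linarith⟩,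
          ⟨by linarith, hx2⟩, by linarith, hy2⟩
  have hmeas2 : MeasurableSet (regionBetween (fun _ : ℝ => P)
      (fun x => min (P + α) (3 * P - x)) (Ioo P (P + α))) :=
    measurableSet_regionBetween measurable_const
      (measurable_const.min (measurable_const.sub measurable_id)) measurableSet_Ioo
  have hdis : Disjoint (regionBetween (fun x => max (P - α) (P - x)) (fun _ => P)
      (Ioo (P - α) P))
      (regionBetween (fun _ : ℝ => P) (fun x => min (P + α) (3 * P - x)) (Ioo P (P + α))) := by
    refine Set.disjoint_left.mpr fun p h1 h2 => ?_
    exact absurd h1.1.2 (not_lt.2 h2.1.1.le)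
  -- volumes of the two pieces as integrals
  have hint1 : IntegrableOn (fun x => max (P - α) (P - x)) (Ioo (P - α) P) volume :=
    ((continuous_const.max (continuous_const.sub continuous_id)).integrableOn_Icc).mono_set
      Ioo_subset_Icc_self
  have hint1' : IntegrableOn (fun _ : ℝ => P) (Ioo (P - α) P) volume :=
    (continuous_const.integrableOn_Icc).mono_set Ioo_subset_Icc_self
  have hint2 : IntegrableOn (fun x => min (P + α) (3 * P - x)) (Ioo P (P + α)) volume :=
    ((continuous_const.min (continuous_const.sub continuous_id)).integrableOn_Icc).mono_set
      Ioo_subset_Icc_self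
  have hint2' : IntegrableOn (fun _ : ℝ => P) (Ioo P (P + α)) volume :=
    (continuous_const.integrableOn_Icc).mono_set Ioo_subset_Icc_self
  have hU1 : volume (regionBetween (fun x => max (P - α) (P - x)) (fun _ => P)
      (Ioo (P - α) P)) = ENNReal.ofReal (∫ y in Ioo (P - α) P, min α y) := by
    rw [Measure.volume_eq_prod, volume_regionBetween_eq_integral hint1 hint1' measurableSet_Ioo
      (fun x hx => max_le (by linarith) (by linarith [hx.1]))]
    congr 1
    refine setIntegral_congr_fun measurableSet_Ioo fun y _ => ?_
    simpa using pi_sub_max α y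
  have hU2 : volume (regionBetween (fun _ : ℝ => P) (fun x => min (P + α) (3 * P - x))
      (Ioo P (P + α))) = ENNReal.ofReal (∫ y in Ioo P (P + α), min α (2 * P - y)) := by
    rw [Measure.volume_eq_prod, volume_regionBetween_eq_integral hint2' hint2 measurableSet_Ioo
      (fun x hx => le_min (by linarith) (by linarith [hx.2]))]
    congr 1
    refine setIntegral_congr_fun measurableSet_Ioo fun y _ => ?_
    simpa using min_sub_pi α y
  have hvol : volume (cycleRegion ∩ (Ioo (P - α) (P + α) ×ˢ Ioo (P - α) (P + α))) =
      ENNReal.ofReal (∫ y in Ioo (P - α) P, min α y) +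
      ENNReal.ofReal (∫ y in Ioo P (P + α), min α (2 * P - y)) := by
    rw [hset, measure_union hdis hmeas2, hU1, hU2]
  have hα2 : (0:ℝ) < 4 * α ^ 2 := by positivity
  rcases le_or_gt α (P / 2) with hc | hc
  · -- small α : both pieces are α²
    have e1 : ∫ y in Ioo (P - α) P, min α y = α * α := by
      rw [setIntegral_congr_fun (g := fun _ => α) measurableSet_Ioo
        (fun y hy => min_eq_left (by linarith [hy.1]))]
      rw [setIntegral_const, Real.volume_real_Ioo, max_eq_left (by linarith),
        smul_eq_mul]
      ring
    have e2 : ∫ y in Ioo P (P + α), min α (2 * P - y) = α * α := by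
      rw [setIntegral_congr_fun (g := fun _ => α) measurableSet_Ioo
        (fun y hy => min_eq_left (by linarith [hy.2]))]
      rw [setIntegral_const, Real.volume_real_Ioo, max_eq_left (by linarith),
        smul_eq_mul]
      ring
    have hp : p3stab α = 1 / 2 := by rw [p3stab, if_pos hc]
    have key : volume (cycleRegion ∩ (Ioo (P - α) (P + α) ×ˢ Ioo (P - α) (P + α))) =
        ENNReal.ofReal (4 * α ^ 2 * p3stab α) := by
      rw [hvol, e1, e2, ← ENNReal.ofReal_add (by positivity) (by positivity), hp]
      congr 1
      ring
    refine ⟨key, ?_⟩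
    rw [key, ENNReal.toReal_ofReal (by rw [hp]; positivity),
      mul_div_cancel_left₀ _ hα2.ne']
  · -- large α
    have e1 : ∫ y in Ioo (P - α) P, min α y =
        (α ^ 2 - (P - α) ^ 2) / 2 + (P - α) * α := by
      rw [← integral_Ioc_eq_integral_Ioo, ← intervalIntegral.integral_of_le (by linarith)]
      rw [← intervalIntegral.integral_add_adjacent_intervals (b := α)
        ((by fun_prop : Continuous fun x : ℝ => min α x).intervalIntegrable _ _)
        ((by fun_prop : Continuous fun x : ℝ => min α x).intervalIntegrable _ _)]
      congr 1
      · rw [intervalIntegral.integral_congr (g := fun y => y)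
          (fun y hy => by
            rw [uIcc_of_le (by linarith)] at hy
            exact min_eq_right hy.2)]
        exact integral_id
      · rw [intervalIntegral.integral_congr (g := fun _ => α)
          (fun y hy => by
            rw [uIcc_of_le (by linarith)] at hy
            exact min_eq_left hy.1)]
        simp [smul_eq_mul]
    have e2 : ∫ y in Ioo P (P + α), min α (2 * P - y) =
        (2 * P - α - P) * α +
          (2 * P * ((P + α) - (2 * P - α)) - ((P + α) ^ 2 - (2 * P - α) ^ 2) / 2) := by
      rw [← integral_Ioc_eq_integral_Ioo, ← intervalIntegral.integral_of_le (by linarith)]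
      rw [← intervalIntegral.integral_add_adjacent_intervals (b := 2 * P - α)
        ((by fun_prop : Continuous fun x : ℝ => min α (2 * P - x)).intervalIntegrable _ _)
        ((by fun_prop : Continuous fun x : ℝ => min α (2 * P - x)).intervalIntegrable _ _)]
      congr 1
      · rw [intervalIntegral.integral_congr (g := fun _ => α)
          (fun y hy => by
            rw [uIcc_of_le (by linarith)] at hy
            exact min_eq_left (by linarith [hy.2]))]
        simp [smul_eq_mul]
      · rw [intervalIntegral.integral_congr (g := fun y => 2 * P - y)
          (fun y hy => by
            rw [uIcc_of_le (by linarith)] at hy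
            exact min_eq_right (by linarith [hy.1]))]
        rw [intervalIntegral.integral_sub (continuous_const.intervalIntegrable _ _)
            intervalIntegrable_id,
          intervalIntegral.integral_const, integral_id, smul_eq_mul]
        ring
    have h1nn : (0:ℝ) ≤ (α ^ 2 - (P - α) ^ 2) / 2 + (P - α) * α := by nlinarith
    have h2nn : (0:ℝ) ≤ (2 * P - α - P) * α +
        (2 * P * ((P + α) - (2 * P - α)) - ((P + α) ^ 2 - (2 * P - α) ^ 2) / 2) := by
      nlinarith
    have hval : 4 * α ^ 2 * p3stab α = 4 * P * α - P ^ 2 - 2 * α ^ 2 := by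
      rw [p3stab, if_neg (not_le.2 hc)]
      field_simp
      ring
    have key : volume (cycleRegion ∩ (Ioo (P - α) (P + α) ×ˢ Ioo (P - α) (P + α))) =
        ENNReal.ofReal (4 * α ^ 2 * p3stab α) := by
      rw [hvol, e1, e2, ← ENNReal.ofReal_add h1nn h2nn, hval]
      congr 1
      ring
    refine ⟨key, ?_⟩
    rw [key, ENNReal.toReal_ofReal (by rw [hval]; nlinarith),
      mul_div_cancel_left₀ _ hα2.ne']
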